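/- Let φ ∈ X and let α : ℝ → ℝ₊ be continuous and bounded, γ ∈ L¹(ℝ₊) nonnegative. Then ∫_{{(x,v): |v|²/2+φ(x)<0}} α(|v|²/2+φ(x)) γ(a_φ(|v|²/2+φ(x))) dx dv = ∫_0^∞ α(a_φ^{-1}(s)) γ(s) ds. -/

import Mathlib

open MeasureTheory Real Filter Set

noncomputable section

abbrev R3 := EuclideanSpace ℝ (Fin 3)

def mX (φ : R3 → ℝ) : ℝ := ⨅ x : R3, (1 + ‖x‖) * |φ x|

def memX (φ : R3 → ℝ) : Prop :=
  Continuous φ ∧ (∀ x, φ x ≤ 0) ∧ Tendsto φ (cocompact R3) (nhds 0) ∧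
    Integrable (fun x => ‖fderiv ℝ φ x‖ ^ 2) ∧ 0 < mX φ

def aphi (φ : R3 → ℝ) (e : ℝ) : ℝ :=
  (8 * π * Real.sqrt 2 / 3) * ∫ x : R3, (max (e - φ x) 0) ^ ((3 : ℝ) / 2)

lemma sqrt_cube (t : ℝ) (ht : 0 ≤ t) : (Real.sqrt t) ^ (3:ℕ) = t ^ ((3:ℝ)/2) := by
  rw [Real.sqrt_eq_rpow, ← Real.rpow_natCast (t ^ ((1:ℝ)/2)) 3, ← Real.rpow_mul ht]
  norm_num

lemma two_rpow : (2:ℝ) ^ ((3:ℝ)/2) = 2 * Real.sqrt 2 := by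
  rw [show (3:ℝ)/2 = 1 + 1/2 by norm_num, Real.rpow_add (by norm_num), Real.rpow_one,
    Real.sqrt_eq_rpow]

lemma aphi_nonneg (φ : R3 → ℝ) (e : ℝ) : 0 ≤ aphi φ e := by
  refine mul_nonneg (by positivity) (integral_nonneg fun x => by positivity)

lemma slice_vol (e c : ℝ) :
    volume {v : R3 | ‖v‖ ^ 2 / 2 + c < e} =
      ENNReal.ofReal ((8 * π * Real.sqrt 2 / 3) * (max (e - c) 0) ^ ((3:ℝ)/2)) := by
  have hset : {v : R3 | ‖v‖ ^ 2 / 2 + c < e} = Metric.ball (0 : R3) (Real.sqrt (2 * (e - c))) := by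
    ext v
    simp only [mem_setOf_eq, Metric.mem_ball, dist_zero_right]
    rw [Real.lt_sqrt (norm_nonneg v)]
    constructor <;> intro h <;> nlinarith
  rw [hset, EuclideanSpace.volume_ball]
  have hcard : Fintype.card (Fin 3) = 3 := by simp
  rw [hcard]
  have hG : Real.Gamma ((3:ℕ)/2 + 1) = 3/4 * Real.sqrt π := by
    push_cast
    rw [show (3:ℝ)/2 + 1 = 1/2 + 1 + 1 by norm_num, Real.Gamma_add_one (by norm_num),
      Real.Gamma_add_one (by norm_num), Real.Gamma_one_half_eq]
    ring
  rw [hG, ← ENNReal.ofReal_pow (Real.sqrt_nonneg _), ← ENNReal.ofReal_mul (by positivity)]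
  congr 1
  have hπ : (0:ℝ) < π := Real.pi_pos
  have hsπ : Real.sqrt π ^ 3 = π * Real.sqrt π := by
    rw [pow_succ, pow_two, Real.mul_self_sqrt hπ.le]
  rcases le_or_gt (e - c) 0 with h | h
  · rw [max_eq_right h, Real.sqrt_eq_zero_of_nonpos (by linarith), Real.zero_rpow (by norm_num)]
    norm_num
  · rw [max_eq_left h.le, sqrt_cube _ (by linarith), Real.mul_rpow (by norm_num) h.le, two_rpow,
      hsπ]
    have hsπ0 : Real.sqrt π ≠ 0 := by positivity
    field_simp
    ring

lemma cont_integrand (φ : R3 → ℝ) (hφc : Continuous φ) (e : ℝ) :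
    Continuous (fun x => (max (e - φ x) 0) ^ ((3:ℝ)/2)) := by
  have : (fun x => (max (e - φ x) 0) ^ ((3:ℝ)/2)) =
      fun x => (Real.sqrt (max (e - φ x) 0)) ^ (3:ℕ) := by
    funext x; rw [sqrt_cube _ (le_max_right _ _)]
  rw [this]
  exact ((Real.continuous_sqrt.comp ((continuous_const.sub hφc).max continuous_const)).pow 3)

lemma compact_sublevel (φ : R3 → ℝ) (hφc : Continuous φ)
    (hco : Tendsto φ (cocompact R3) (nhds 0)) (e : ℝ) (he : e < 0) :
    IsCompact (φ ⁻¹' Iic e) := by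
  have h1 : φ ⁻¹' (Ioi e) ∈ cocompact R3 := hco (Ioi_mem_nhds he)
  rcases mem_cocompact.mp h1 with ⟨K, hK, hKsub⟩
  refine IsCompact.of_isClosed_subset hK (isClosed_Iic.preimage hφc) ?_
  intro x hx
  by_contra hxK
  exact absurd (hKsub hxK) (by simpa using hx)

lemma integrable_integrand (φ : R3 → ℝ) (hφc : Continuous φ)
    (hco : Tendsto φ (cocompact R3) (nhds 0)) (e : ℝ) (he : e < 0) :
    Integrable (fun x => (8 * π * Real.sqrt 2 / 3) * (max (e - φ x) 0) ^ ((3:ℝ)/2)) := by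
  refine (Continuous.integrable_of_hasCompactSupport
      (continuous_const.mul (cont_integrand φ hφc e)) ?_)
  refine HasCompactSupport.intro (compact_sublevel φ hφc hco e he) ?_
  intro x hx
  have : e - φ x < 0 := by
    simp only [mem_preimage, mem_Iic, not_le] at hx
    linarith
  rw [max_eq_right this.le, Real.zero_rpow (by norm_num), mul_zero]

def Efun (φ : R3 → ℝ) (p : R3 × R3) : ℝ := ‖p.2‖ ^ 2 / 2 + φ p.1

lemma Efun_cont (φ : R3 → ℝ) (hφc : Continuous φ) : Continuous (Efun φ) := by
  unfold Efun; fun_prop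

lemma Aset_meas (φ : R3 → ℝ) (hφc : Continuous φ) (e : ℝ) :
    MeasurableSet {p : R3 × R3 | Efun φ p < e} :=
  measurableSet_lt (Efun_cont φ hφc).measurable measurable_const

lemma A_eq (φ : R3 → ℝ) (hφc : Continuous φ)
    (hco : Tendsto φ (cocompact R3) (nhds 0)) (e : ℝ) (he : e < 0) :
    volume {p : R3 × R3 | Efun φ p < e} = ENNReal.ofReal (aphi φ e) := by
  rw [Measure.volume_eq_prod, Measure.prod_apply (Aset_meas φ hφc e)]
  have h1 : ∀ x : R3, volume (Prod.mk x ⁻¹' {p : R3 × R3 | Efun φ p < e}) =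
      ENNReal.ofReal ((8 * π * Real.sqrt 2 / 3) * (max (e - φ x) 0) ^ ((3:ℝ)/2)) := by
    intro x
    have : Prod.mk x ⁻¹' {p : R3 × R3 | Efun φ p < e} = {v : R3 | ‖v‖ ^ 2 / 2 + φ x < e} := rfl
    rw [this, slice_vol]
  simp_rw [h1]
  rw [← ofReal_integral_eq_lintegral_ofReal (integrable_integrand φ hφc hco e he)
    (Filter.Eventually.of_forall fun x => by positivity)]
  unfold aphi
  rw [MeasureTheory.integral_const_mul]

theorem change_of_variables (φ : R3 → ℝ) (hφ : memX φ)
    (x₀ : R3) (hx₀ : ∀ x, φ x₀ ≤ φ x)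
    (aInv : ℝ → ℝ)
    (haInv₁ : ∀ e ∈ Ico (φ x₀) (0 : ℝ), aInv (aphi φ e) = e)
    (haInv₂ : ∀ s : ℝ, 0 ≤ s → aphi φ (aInv s) = s ∧ aInv s ∈ Ico (φ x₀) (0 : ℝ))
    (α : ℝ → ℝ) (hα : Continuous α) (hαb : ∃ M, ∀ e, α e ≤ M) (hαpos : ∀ e, 0 ≤ α e)
    (γ : ℝ → ℝ) (hγ : IntegrableOn γ (Ioi (0 : ℝ))) (hγpos : ∀ s, 0 ≤ γ s) :
    ∫ p in {p : R3 × R3 | ‖p.2‖ ^ 2 / 2 + φ p.1 < 0},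
        α (‖p.2‖ ^ 2 / 2 + φ p.1) * γ (aphi φ (‖p.2‖ ^ 2 / 2 + φ p.1))
      = ∫ s in Ioi (0 : ℝ), α (aInv s) * γ s := by
  obtain ⟨hφc, hφneg, hco, -, hmX⟩ := hφ
  -- φ x₀ < 0
  have hx₀neg : φ x₀ < 0 := by
    rcases lt_or_eq_of_le (hφneg x₀) with h | h
    · exact h
    · exfalso
      have h0 : mX φ ≤ (1 + ‖x₀‖) * |φ x₀| :=
        ciInf_le ⟨0, by rintro y ⟨x, rfl⟩; positivity⟩ x₀
      rw [h] at h0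
      simp at h0
      linarith [hmX, h0]
  -- basic objects
  set A : ℝ → ENNReal := fun e => volume {p : R3 × R3 | Efun φ p < e} with hA
  have hAmono : Monotone A := fun e e' h => measure_mono (fun p hp => lt_of_lt_of_le hp h)
  have hAmeas : Measurable A := hAmono.measurable
  set g : ℝ → ℝ := fun e => (A e).toReal with hgdef
  have hgmeas : Measurable g := hAmeas.ennreal_toReal
  have hAval : ∀ e < 0, A e = ENNReal.ofReal (aphi φ e) := fun e he => A_eq φ hφc hco e he
  have hgval : ∀ e < 0, g e = aphi φ e := by
    intro e he
    rw [hgdef]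
    simp only
    rw [hAval e he, ENNReal.toReal_ofReal (aphi_nonneg φ e)]
  -- aphi is monotone on negatives
  have haphi_mono : ∀ e e' : ℝ, e ≤ e' → e' < 0 → aphi φ e ≤ aphi φ e' := by
    intro e e' h h'
    have h1 := hAmono h
    rw [hAval e (lt_of_le_of_lt h h'), hAval e' h'] at h1
    have := ENNReal.toReal_mono ENNReal.ofReal_ne_top h1
    rwa [ENNReal.toReal_ofReal (aphi_nonneg φ e), ENNReal.toReal_ofReal (aphi_nonneg φ e')] at this
  -- aphi (φ x₀) = 0
  have haphix₀ : aphi φ (φ x₀) = 0 := by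
    unfold aphi
    have : ∀ x : R3, (max (φ x₀ - φ x) 0) ^ ((3:ℝ)/2) = 0 := by
      intro x
      rw [max_eq_right (by linarith [hx₀ x]), Real.zero_rpow (by norm_num)]
    simp [this]
  -- key equivalence
  have hkey : ∀ e ∈ Ico (φ x₀) (0:ℝ), ∀ b : ℝ, 0 < b → (aphi φ e < b ↔ e < aInv b) := by
    intro e he b hb
    obtain ⟨hab, haInvmem⟩ := haInv₂ b hb.le
    constructor
    · intro h
      by_contra hc
      push_neg at hc
      have := haphi_mono (aInv b) e hc he.2
      rw [hab] at this
      linarith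
    · intro h
      have h1 : aphi φ e ≤ b := by
        have := haphi_mono e (aInv b) h.le haInvmem.2
        rwa [hab] at this
      rcases lt_or_eq_of_le h1 with h2 | h2
      · exact h2
      · exfalso
        have : aInv (aphi φ e) = e := haInv₁ e he
        rw [h2] at this
        rw [this] at h
        exact lt_irrefl e h
  -- masses
  set S : Set (R3 × R3) := {p : R3 × R3 | Efun φ p < 0} with hS
  set μ : Measure ℝ := Measure.map (Efun φ) (volume.restrict S) with hμ
  have hEmeas : Measurable (Efun φ) := (Efun_cont φ hφc).measurable
  have hμIio : ∀ e ≤ (0:ℝ), μ (Iio e) = A e := by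
    intro e he
    rw [hμ, Measure.map_apply hEmeas measurableSet_Iio,
      Measure.restrict_apply (hEmeas measurableSet_Iio)]
    have hseteq : Efun φ ⁻¹' Iio e ∩ S = {p : R3 × R3 | Efun φ p < e} := by
      ext p
      simp only [mem_inter_iff, mem_preimage, mem_Iio, hS, mem_setOf_eq]
      exact ⟨fun h => h.1, fun h => ⟨h, lt_of_lt_of_le h he⟩⟩
    rw [hseteq]
  have hμIci : μ (Ici (0:ℝ)) = 0 := by
    rw [hμ, Measure.map_apply hEmeas measurableSet_Ici,
      Measure.restrict_apply (hEmeas measurableSet_Ici)]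
    convert measure_empty
    · ext p
      simp only [mem_inter_iff, mem_preimage, mem_Ici, hS, mem_setOf_eq, mem_empty_iff_false,
        iff_false, not_and]
      intro h
      linarith
    · infer_instance
  have hμIiox₀ : μ (Iio (φ x₀)) = 0 := by
    rw [hμIio (φ x₀) hx₀neg.le, hAval (φ x₀) hx₀neg, haphix₀]
    simp
  have hμP : μ (Ico (φ x₀) (0:ℝ))ᶜ = 0 := by
    have hsub : (Ico (φ x₀) (0:ℝ))ᶜ ⊆ Iio (φ x₀) ∪ Ici 0 := by
      intro e he
      simp only [mem_compl_iff, mem_Ico, not_and, not_lt] at he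
      rcases lt_or_ge e (φ x₀) with h | h
      · exact Or.inl h
      · exact Or.inr (he h)
    refine le_antisymm (le_trans (measure_mono hsub) ?_) zero_le
    refine le_trans (measure_union_le _ _) ?_
    rw [hμIiox₀, hμIci]
    simp
  -- aInv monotone on nonnegatives
  have haInv_mono : ∀ s t : ℝ, 0 ≤ s → s ≤ t → aInv s ≤ aInv t := by
    intro s t hs hst
    by_contra hc
    push_neg at hc
    have h1 := haphi_mono (aInv t) (aInv s) hc.le (haInv₂ s hs).2.2
    rw [(haInv₂ t (hs.trans hst)).1, (haInv₂ s hs).1] at h1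
    have : s = t := le_antisymm hst h1
    rw [this] at hc
    exact lt_irrefl _ hc
  -- finiteness of μ Iio for negatives
  have hμIiofin : ∀ e < (0:ℝ), μ (Iio e) ≠ ⊤ := by
    intro e he
    rw [hμIio e he.le, hAval e he]
    exact ENNReal.ofReal_ne_top
  -- ν = Lebesgue on (0, ∞)
  have hν : Measure.map g μ = volume.restrict (Ioi (0:ℝ)) := by
    have hIco : ∀ a b : ℝ, a < b →
        Measure.map g μ (Ico a b) = volume.restrict (Ioi (0:ℝ)) (Ico a b) := by
      intro a b hab
      rw [Measure.map_apply hgmeas measurableSet_Ico,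
        Measure.restrict_apply measurableSet_Ico]
      rw [← measure_inter_conull hμP]
      rcases le_or_gt b 0 with hb | hb
      · have h1 : g ⁻¹' Ico a b ∩ Ico (φ x₀) 0 = ∅ := by
          ext e
          simp only [mem_inter_iff, mem_preimage, mem_Ico, mem_empty_iff_false, iff_false]
          rintro ⟨⟨hge1, hge2⟩, he1, he2⟩
          rw [hgval e he2] at hge2
          linarith [aphi_nonneg φ e]
        have h2 : Ico a b ∩ Ioi (0:ℝ) = ∅ := by
          ext s
          simp only [mem_inter_iff, mem_Ico, mem_Ioi, mem_empty_iff_false, iff_false]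
          rintro ⟨⟨h1, h2⟩, h3⟩
          linarith
        rw [h1, h2]
        simp
      · obtain ⟨habv, hbmem⟩ := haInv₂ b hb.le
        rcases le_or_gt a 0 with ha | ha
        · have h1 : g ⁻¹' Ico a b ∩ Ico (φ x₀) 0 = Ico (φ x₀) (aInv b) := by
            ext e
            simp only [mem_inter_iff, mem_preimage, mem_Ico]
            constructor
            · rintro ⟨⟨h1, h2⟩, h3, h4⟩
              rw [hgval e h4] at h2
              exact ⟨h3, (hkey e ⟨h3, h4⟩ b hb).mp h2⟩
            · rintro ⟨h1, h2⟩
              have he0 : e < 0 := lt_of_lt_of_le h2 (le_of_lt hbmem.2)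
              refine ⟨⟨?_, ?_⟩, h1, he0⟩
              · rw [hgval e he0]; linarith [aphi_nonneg φ e]
              · rw [hgval e he0]; exact (hkey e ⟨h1, he0⟩ b hb).mpr h2
          have h2 : Ico a b ∩ Ioi (0:ℝ) = Ioo 0 b := by
            ext s
            simp only [mem_inter_iff, mem_Ico, mem_Ioi, mem_Ioo]
            constructor
            · rintro ⟨⟨h1, h2⟩, h3⟩; exact ⟨h3, h2⟩
            · rintro ⟨h1, h2⟩; exact ⟨⟨by linarith, h2⟩, h1⟩
          rw [h1, h2, show Ico (φ x₀) (aInv b) = Iio (aInv b) \ Iio (φ x₀) by ext; simp [and_comm], measure_diff_null hμIiox₀, hμIio (aInv b) hbmem.2.le,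
            hAval (aInv b) hbmem.2, habv, Real.volume_Ioo]
          simp
        · have h1 : g ⁻¹' Ico a b ∩ Ico (φ x₀) 0 = Ico (aInv a) (aInv b) := by
            obtain ⟨haav, hamem⟩ := haInv₂ a ha.le
            ext e
            simp only [mem_inter_iff, mem_preimage, mem_Ico]
            constructor
            · rintro ⟨⟨h1, h2⟩, h3, h4⟩
              rw [hgval e h4] at h1 h2
              refine ⟨?_, (hkey e ⟨h3, h4⟩ b hb).mp h2⟩
              by_contra hc
              push_neg at hc
              have := (hkey e ⟨h3, h4⟩ a ha).mpr hc
              linarith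
            · rintro ⟨h1, h2⟩
              have he0 : e < 0 := lt_of_lt_of_le h2 (le_of_lt hbmem.2)
              have hex₀ : φ x₀ ≤ e := le_trans hamem.1 h1
              refine ⟨⟨?_, ?_⟩, hex₀, he0⟩
              · rw [hgval e he0]
                by_contra hc
                push_neg at hc
                have := (hkey e ⟨hex₀, he0⟩ a ha).mp hc
                linarith
              · rw [hgval e he0]
                exact (hkey e ⟨hex₀, he0⟩ b hb).mpr h2
          have h2 : Ico a b ∩ Ioi (0:ℝ) = Ico a b := by
            rw [inter_eq_left]
            intro s hs
            simp only [mem_Ico] at hs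
            simp only [mem_Ioi]
            linarith [hs.1]
          have hmono : aInv a ≤ aInv b := haInv_mono a b ha.le hab.le
          rw [h1, h2, show Ico (aInv a) (aInv b) = Iio (aInv b) \ Iio (aInv a) by ext; simp [and_comm],
            measure_diff (Iio_subset_Iio hmono) measurableSet_Iio.nullMeasurableSet
              (hμIiofin (aInv a) (haInv₂ a ha.le).2.2),
            hμIio (aInv b) (haInv₂ b hb.le).2.2.le, hμIio (aInv a) (haInv₂ a ha.le).2.2.le,
            hAval (aInv b) (haInv₂ b hb.le).2.2, hAval (aInv a) (haInv₂ a ha.le).2.2,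
            (haInv₂ b hb.le).1, (haInv₂ a ha.le).1, Real.volume_Ico,
            ← ENNReal.ofReal_sub b ha.le]
    refine Measure.ext_of_Ico' _ _ ?_ hIco
    intro a b hab
    rw [hIco a b hab, Measure.restrict_apply measurableSet_Ico]
    exact ne_top_of_le_ne_top (by rw [Real.volume_Ico]; exact ENNReal.ofReal_ne_top)
      (measure_mono inter_subset_left)
  -- a.e. membership
  have hae : ∀ᵐ e ∂μ, e ∈ Ico (φ x₀) (0:ℝ) := by
    rw [ae_iff]
    exact hμP
  -- strongly measurable pieces
  have hγmeas : AEStronglyMeasurable γ (Measure.map g μ) := by rw [hν]; exact hγ.1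
  have hγg : AEStronglyMeasurable (γ ∘ g) μ := hγmeas.comp_aemeasurable hgmeas.aemeasurable
  have hF2 : AEStronglyMeasurable (fun e => α e * γ (g e)) μ :=
    (hα.aestronglyMeasurable).mul hγg
  have hFeq : (fun e => α e * γ (aphi φ e)) =ᵐ[μ] (fun e => α e * γ (g e)) := by
    filter_upwards [hae] with e he
    rw [hgval e he.2]
  have hF : AEStronglyMeasurable (fun e => α e * γ (aphi φ e)) μ := hF2.congr hFeq.symm
  -- step 1 : LHS as integral over μ
  have hstep1 : ∫ p in S, α (Efun φ p) * γ (aphi φ (Efun φ p))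
      = ∫ e, α e * γ (aphi φ e) ∂μ := by
    rw [hμ, integral_map hEmeas.aemeasurable hF]
  -- step 2 : substitute aInv
  have hstep2 : ∫ e, α e * γ (aphi φ e) ∂μ = ∫ e, α (aInv (g e)) * γ (g e) ∂μ := by
    refine integral_congr_ae ?_
    filter_upwards [hae] with e he
    rw [hgval e he.2, haInv₁ e he]
  -- measurability of α ∘ aInv on (0,∞)
  have hg2 : Monotone (fun s => aInv (max s 0)) := by
    intro s t hst
    exact haInv_mono _ _ (le_max_right s 0) (max_le_max hst le_rfl)
  have hHmeas : AEStronglyMeasurable (fun s => α (aInv s) * γ s) (Measure.map g μ) := by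
    rw [hν]
    have h1 : AEStronglyMeasurable (fun s => α (aInv (max s 0)) * γ s)
        (volume.restrict (Ioi (0:ℝ))) :=
      ((hα.measurable.comp hg2.measurable).aestronglyMeasurable).mul hγ.1
    refine h1.congr ?_
    filter_upwards [ae_restrict_mem measurableSet_Ioi] with s hs
    rw [max_eq_left (le_of_lt hs)]
  -- step 3 : map to Lebesgue
  have hstep3 : ∫ e, α (aInv (g e)) * γ (g e) ∂μ
      = ∫ s, α (aInv s) * γ s ∂(Measure.map g μ) := by
    rw [integral_map hgmeas.aemeasurable hHmeas]
  have hfinal : ∫ s, α (aInv s) * γ s ∂(Measure.map g μ) = ∫ s in Ioi (0:ℝ), α (aInv s) * γ s := by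
    rw [hν]
  calc ∫ p in {p : R3 × R3 | ‖p.2‖ ^ 2 / 2 + φ p.1 < 0},
        α (‖p.2‖ ^ 2 / 2 + φ p.1) * γ (aphi φ (‖p.2‖ ^ 2 / 2 + φ p.1))
      = ∫ p in S, α (Efun φ p) * γ (aphi φ (Efun φ p)) := rfl
    _ = ∫ e, α e * γ (aphi φ e) ∂μ := hstep1
    _ = ∫ e, α (aInv (g e)) * γ (g e) ∂μ := hstep2
    _ = ∫ s, α (aInv s) * γ s ∂(Measure.map g μ) := hstep3
    _ = ∫ s in Ioi (0:ℝ), α (aInv s) * γ s := hfinal
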